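/- Let B be an affine domain over an infinite field k, and f ∈ B such that f − λ is a prime element of B for infinitely many λ ∈ k. Let φ be a non-trivial exponential map on B with f ∈ B^φ. Then there exist infinitely many β ∈ k such that f − β is prime in B and φ induces a non-trivial exponential map φ̂ on B/(f−β), with the image of B^φ in B/(f−β) contained in (B/(f−β))^{φ̂}. -/

import Mathlib

open Polynomial in
/-- `φ : A → A[U]` is an exponential map: evaluation of `U` at `0` is the identity,
and the coaction identity `φ_V φ_U = φ_{V+U}` holds. -/
def IsExpMap {k A : Type*} [CommSemiring k] [CommRing A] [Algebra k A]
    (φ : A →ₐ[k] Polynomial A) : Prop :=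
  (∀ a : A, (φ a).eval 0 = a) ∧
  (∀ a : A, (φ a).map φ.toRingHom =
      (φ a).eval₂ (C.comp (C : A →+* Polynomial A)) (X + C X))

open Polynomial in
/-- The ring of invariants of an exponential map. -/
def expInvariants {k A : Type*} [CommSemiring k] [CommRing A] [Algebra k A]
    (φ : A →ₐ[k] Polynomial A) : Set A := {a | φ a = C a}

open Polynomial in
theorem aux_descend {k B : Type*} [Field k] [CommRing B] [Algebra k B]
    (φ : B →ₐ[k] Polynomial B) (hφ : IsExpMap φ) (g : B) (hg : φ g = C g) :
    ∃ ψ : (B ⧸ Ideal.span {g}) →ₐ[k] Polynomial (B ⧸ Ideal.span {g}),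
      (∀ b : B, ψ (Ideal.Quotient.mk _ b) = (φ b).map (Ideal.Quotient.mk (Ideal.span {g}))) ∧
      IsExpMap ψ := by
  set I := Ideal.span {g}
  set mk := Ideal.Quotient.mk I
  have hmkg : mk g = 0 := Ideal.Quotient.eq_zero_iff_mem.2 (Ideal.subset_span rfl)
  obtain ⟨ψ, hψ⟩ : ∃ ψ : (B ⧸ I) →ₐ[k] Polynomial (B ⧸ I),
      ∀ b : B, ψ (mk b) = (φ b).map mk := by
    refine ⟨Ideal.Quotient.liftₐ I ((mapAlgHom (Ideal.Quotient.mkₐ k I)).comp φ) ?_, ?_⟩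
    · intro a ha
      rw [Ideal.mem_span_singleton] at ha
      obtain ⟨c, rfl⟩ := ha
      simp only [AlgHom.comp_apply, map_mul, hg, coe_mapAlgHom]
      rw [map_C]
      show C (mk g) * _ = 0
      rw [hmkg, map_zero, zero_mul]
    · intro b
      show Ideal.Quotient.liftₐ I _ _ (mk b) = _
      rw [Ideal.Quotient.liftₐ_apply]
      show ((mapAlgHom (Ideal.Quotient.mkₐ k I)).comp φ) b = _
      simp [coe_mapAlgHom]
      rfl
  have hcomp : ψ.toRingHom.comp mk = (mapRingHom mk).comp φ.toRingHom :=
    RingHom.ext fun b => by simpa using hψ b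
  refine ⟨ψ, hψ, ?_, ?_⟩
  · intro x
    obtain ⟨b, rfl⟩ := Ideal.Quotient.mk_surjective x
    rw [hψ b, eval_zero_map, hφ.1]
  · intro x
    obtain ⟨b, rfl⟩ := Ideal.Quotient.mk_surjective x
    rw [hψ b, map_map, hcomp, ← map_map, hφ.2 b]
    rw [show (map (mapRingHom mk) ((φ b).eval₂ (C.comp C) (X + C X)) : Polynomial (Polynomial (B ⧸ I)))
        = (mapRingHom (mapRingHom mk)) ((φ b).eval₂ (C.comp C) (X + C X)) from rfl,
      hom_eval₂, eval₂_map]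
    congr 1
    · ext c
      simp
    · simp

open Polynomial in
/-- If `B` is an affine domain over an infinite field `k`, `f − λ` is prime for
infinitely many `λ`, and `φ` is a non-trivial exponential map with `f` invariant,
then for infinitely many `β` the element `f − β` is prime and `φ` induces a
non-trivial exponential map on `B/(f − β)` under which the image of `B^φ` is
invariant. -/
theorem exponential_map_descends_to_fibers
    {k B : Type*} [Field k] [Infinite k] [CommRing B] [IsDomain B] [Algebra k B]
    [Algebra.FiniteType k B] (f : B)
    (hprime : {lam : k | Prime (f - algebraMap k B lam)}.Infinite)
    (φ : B →ₐ[k] Polynomial B) (hφ : IsExpMap φ)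
    (hnt : ∃ b, φ b ≠ C b) (hf : φ f = C f) :
    {β : k | Prime (f - algebraMap k B β) ∧
      ∃ ψ : (B ⧸ Ideal.span {f - algebraMap k B β}) →ₐ[k]
          Polynomial (B ⧸ Ideal.span {f - algebraMap k B β}),
        IsExpMap ψ ∧ (∃ c, ψ c ≠ C c) ∧
        (∀ b : B, ψ (Ideal.Quotient.mk _ b)
            = (φ b).map (Ideal.Quotient.mk (Ideal.span {f - algebraMap k B β}))) ∧
        (∀ b : B, φ b = C b →
          ψ (Ideal.Quotient.mk _ b) = C (Ideal.Quotient.mk _ b))}.Infinite := by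
  classical
  obtain ⟨b0, hb0⟩ := hnt
  obtain ⟨n, hn⟩ : ∃ n, (φ b0).coeff n ≠ (C b0).coeff n := by
    by_contra h
    push_neg at h
    exact hb0 (Polynomial.ext h)
  have hn0 : n ≠ 0 := by
    rintro rfl
    apply hn
    rw [coeff_zero_eq_eval_zero, hφ.1 b0, coeff_C_zero]
  have ha : (φ b0).coeff n ≠ 0 := by
    rwa [coeff_C, if_neg hn0] at hn
  set a := (φ b0).coeff n with ha_def
  haveI : IsNoetherianRing B := Algebra.FiniteType.isNoetherianRing k B
  haveI : WfDvdMonoid B := IsNoetherianRing.wfDvdMonoid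
  obtain ⟨M, hMirr, hMass⟩ := WfDvdMonoid.exists_factors a ha
  set Bad : Set k := {β : k | Prime (f - algebraMap k B β) ∧ (f - algebraMap k B β) ∣ a}
    with hBad_def
  have hBadfin : Bad.Finite := by
    have hsub : Bad ⊆ ⋃ q ∈ M.toFinset,
        {β : k | Prime (f - algebraMap k B β) ∧ Associated (f - algebraMap k B β) q} := by
      rintro β ⟨hp, hdvd⟩
      have hdM : (f - algebraMap k B β) ∣ M.prod := hdvd.trans hMass.symm.dvd
      obtain ⟨q, hqM, hpq⟩ := hp.exists_mem_multiset_dvd hdM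
      refine Set.mem_biUnion (Multiset.mem_toFinset.2 hqM) ⟨hp, ?_⟩
      exact (hp.irreducible).associated_of_dvd (hMirr q hqM) hpq
    refine Set.Finite.subset (Set.Finite.biUnion M.toFinset.finite_toSet fun q _ => ?_) hsub
    apply Set.Subsingleton.finite
    rintro β ⟨hβp, hβq⟩ β' ⟨hβ'p, hβ'q⟩
    by_contra hne
    obtain ⟨u, hu⟩ := hβq.trans hβ'q.symm
    have hmem : algebraMap k B (β - β') ∈ Ideal.span {f - algebraMap k B β} := by
      have : algebraMap k B (β - β') = (f - algebraMap k B β) * (↑u - 1) := by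
        rw [mul_sub, hu, mul_one]
        rw [map_sub]
        ring
      rw [this]
      exact Ideal.mul_mem_right _ _ (Ideal.subset_span rfl)
    have hunit : IsUnit (algebraMap k B (β - β')) :=
      (isUnit_iff_ne_zero.2 (sub_ne_zero.2 hne)).map (algebraMap k B)
    have htop : Ideal.span {f - algebraMap k B β} = ⊤ :=
      Ideal.eq_top_of_isUnit_mem _ hmem hunit
    exact hβp.not_unit (Ideal.span_singleton_eq_top.1 htop)
  refine ((hprime.diff hBadfin).mono ?_)
  rintro β ⟨hβprime, hβnotbad⟩
  have hβnd : ¬ (f - algebraMap k B β) ∣ a := fun hd => hβnotbad ⟨hβprime, hd⟩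
  have hg : φ (f - algebraMap k B β) = C (f - algebraMap k B β) := by
    rw [map_sub, hf, AlgHom.commutes]
    rw [Polynomial.algebraMap_apply, map_sub]
  obtain ⟨ψ, hψdef, hψexp⟩ := aux_descend φ hφ _ hg
  refine ⟨hβprime, ψ, hψexp, ⟨Ideal.Quotient.mk _ b0, ?_⟩, hψdef, ?_⟩
  · intro h
    rw [hψdef b0] at h
    have h2 := congrArg (fun p => p.coeff n) h
    simp only [coeff_map, coeff_C, if_neg hn0] at h2
    rw [Ideal.Quotient.eq_zero_iff_mem, Ideal.mem_span_singleton] at h2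
    exact hβnd h2
  · intro b hb
    rw [hψdef b, hb, map_C]
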